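/- Let n ≥ 2 be an integer, s > 0 a real number, α ∈ (0, 1), and let t > 0 satisfy F_{n-1}(t) - F_{n-1}(-t) = 1 - α. Set k₂ = 1/f_{n-1}(t). Then the function of (q, r) defined on {(q, r) ∈ ℝ² : q ≤ r} by (r - q)/s - (k₂/√n)(F_{n-1}(√n r/s) - F_{n-1}(√n q/s)) attains its minimum at (q, r) = (-t s/√n, t s/√n): for all reals q ≤ r, (r - q)/s - (k₂/√n)(F_{n-1}(√n r/s) - F_{n-1}(√n q/s)) ≥ 2t/√n - (k₂/√n)(F_{n-1}(t) - F_{n-1}(-t)). -/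

import Mathlib

open MeasureTheory

/-- Student t pdf with `m` degrees of freedom. -/
noncomputable def tPdf (m : ℕ) (x : ℝ) : ℝ :=
  (Real.Gamma (((m : ℝ) + 1) / 2) / (Real.sqrt ((m : ℝ) * Real.pi) * Real.Gamma ((m : ℝ) / 2))) *
    (1 + x ^ 2 / (m : ℝ)) ^ (-(((m : ℝ) + 1) / 2))

/-- Student t cdf with `m` degrees of freedom. -/
noncomputable def tCdf (m : ℕ) (x : ℝ) : ℝ :=
  ∫ u in Set.Iic x, tPdf m u

lemma tPdf_pos {m : ℕ} (hm : 1 ≤ m) (x : ℝ) : 0 < tPdf m x := by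
  have hm' : (1:ℝ) ≤ (m:ℝ) := by exact_mod_cast hm
  have h1 : 0 < Real.Gamma (((m : ℝ) + 1) / 2) := Real.Gamma_pos_of_pos (by linarith)
  have h2 : 0 < Real.Gamma ((m : ℝ) / 2) := Real.Gamma_pos_of_pos (by linarith)
  have h3 : 0 < Real.sqrt ((m : ℝ) * Real.pi) :=
    Real.sqrt_pos.2 (by positivity)
  have h4 : 0 < (1 + x ^ 2 / (m : ℝ)) := by positivity
  unfold tPdf
  positivity

lemma tPdf_continuous (m : ℕ) : Continuous (tPdf m) := by
  unfold tPdf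
  refine Continuous.mul continuous_const ?_
  refine Continuous.rpow_const (by continuity) (fun x => Or.inl ?_)
  have : (0:ℝ) ≤ x ^ 2 / (m:ℝ) := div_nonneg (sq_nonneg x) (Nat.cast_nonneg m)
  intro hx; linarith [hx ▸ this]

lemma tPdf_anti {m : ℕ} (hm : 1 ≤ m) {x y : ℝ} (h : x ^ 2 ≤ y ^ 2) :
    tPdf m y ≤ tPdf m x := by
  have hm' : (1:ℝ) ≤ (m:ℝ) := by exact_mod_cast hm
  have h1 : 0 < Real.Gamma (((m : ℝ) + 1) / 2) := Real.Gamma_pos_of_pos (by linarith)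
  have h2 : 0 < Real.Gamma ((m : ℝ) / 2) := Real.Gamma_pos_of_pos (by linarith)
  have h3 : 0 < Real.sqrt ((m : ℝ) * Real.pi) := Real.sqrt_pos.2 (by positivity)
  unfold tPdf
  refine mul_le_mul_of_nonneg_left ?_ (by positivity)
  refine Real.rpow_le_rpow_of_nonpos (by positivity) (by gcongr) (by nlinarith)

lemma tPdf_integrable {m : ℕ} (hm : 1 ≤ m) : Integrable (tPdf m) := by
  have hm' : (1:ℝ) ≤ (m:ℝ) := by exact_mod_cast hm
  have hm0 : (0:ℝ) < (m:ℝ) := by linarith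
  set C : ℝ := Real.Gamma (((m : ℝ) + 1) / 2) /
      (Real.sqrt ((m : ℝ) * Real.pi) * Real.Gamma ((m : ℝ) / 2)) with hC
  have h1 : 0 < Real.Gamma (((m : ℝ) + 1) / 2) := Real.Gamma_pos_of_pos (by linarith)
  have h2 : 0 < Real.Gamma ((m : ℝ) / 2) := Real.Gamma_pos_of_pos (by linarith)
  have h3 : 0 < Real.sqrt ((m : ℝ) * Real.pi) := Real.sqrt_pos.2 (by positivity)
  have hCpos : 0 < C := by positivity
  have hbound : ∀ x : ℝ, tPdf m x ≤ C * (m : ℝ) * (1 + x ^ 2)⁻¹ := by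
    intro x
    have hx0 : (0:ℝ) ≤ x ^ 2 / (m:ℝ) := by positivity
    have hb : (1:ℝ) ≤ 1 + x ^ 2 / (m : ℝ) := by linarith
    have step1 : (1 + x ^ 2 / (m : ℝ)) ^ (-(((m : ℝ) + 1) / 2))
        ≤ (1 + x ^ 2 / (m : ℝ)) ^ (-1 : ℝ) :=
      Real.rpow_le_rpow_of_exponent_le hb (by linarith)
    have step2 : (1 + x ^ 2 / (m : ℝ)) ^ (-1 : ℝ) = (1 + x ^ 2 / (m : ℝ))⁻¹ :=
      Real.rpow_neg_one _
    have step3 : (1 + x ^ 2 / (m : ℝ))⁻¹ ≤ (m : ℝ) * (1 + x ^ 2)⁻¹ := by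
      rw [inv_eq_one_div, inv_eq_one_div, mul_one_div, div_le_div_iff₀ (by positivity) (by positivity)]
      have : (m:ℝ) * (1 + x ^ 2 / (m:ℝ)) = (m:ℝ) + x ^ 2 := by field_simp
      nlinarith
    calc tPdf m x = C * (1 + x ^ 2 / (m : ℝ)) ^ (-(((m : ℝ) + 1) / 2)) := rfl
      _ ≤ C * ((m : ℝ) * (1 + x ^ 2)⁻¹) := by
          refine mul_le_mul_of_nonneg_left ?_ hCpos.le
          exact step1.trans (step2.le.trans step3)
      _ = C * (m : ℝ) * (1 + x ^ 2)⁻¹ := by ring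
  refine Integrable.mono ((integrable_inv_one_add_sq).const_mul (C * (m:ℝ)))
    (tPdf_continuous m).aestronglyMeasurable ?_
  refine Filter.Eventually.of_forall (fun x => ?_)
  rw [Real.norm_eq_abs, Real.norm_eq_abs, abs_of_pos (tPdf_pos hm x), abs_of_pos (by positivity)]
  exact hbound x

lemma tCdf_sub {m : ℕ} (hm : 1 ≤ m) {a b : ℝ} (hab : a ≤ b) :
    tCdf m b - tCdf m a = ∫ x in Set.Ioc a b, tPdf m x := by
  have hI := tPdf_integrable hm
  rw [tCdf, tCdf, intervalIntegral.integral_Iic_sub_Iic hI.integrableOn hI.integrableOn,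
    intervalIntegral.integral_of_le hab]

lemma integral_g {m : ℕ} (hm : 1 ≤ m) (k : ℝ) {a b : ℝ} (hab : a ≤ b) :
    ∫ x in Set.Ioc a b, (1 - k * tPdf m x) =
      (b - a) - k * ∫ x in Set.Ioc a b, tPdf m x := by
  rw [MeasureTheory.integral_sub (integrableOn_const (C := (1:ℝ)) measure_Ioc_lt_top.ne (by simp))
      (((tPdf_integrable hm).integrableOn).const_mul k),
    MeasureTheory.setIntegral_const, MeasureTheory.integral_const_mul,
    Real.volume_real_Ioc_of_le hab, smul_eq_mul, mul_one]

lemma key {m : ℕ} (hm : 1 ≤ m) {t : ℝ} (ht : 0 < t) {a b : ℝ} (hab : a ≤ b) :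
    (b - a) - (1 / tPdf m t) * ∫ x in Set.Ioc a b, tPdf m x ≥
      (t - (-t)) - (1 / tPdf m t) * ∫ x in Set.Ioc (-t) t, tPdf m x := by
  set k : ℝ := 1 / tPdf m t with hk
  have hpt := tPdf_pos hm t
  have hkpos : 0 < k := by positivity
  set g : ℝ → ℝ := fun x => 1 - k * tPdf m x with hg
  have hint : ∀ u v : ℝ, IntegrableOn g (Set.Ioc u v) :=
    fun u v => (integrableOn_const (C := (1:ℝ)) measure_Ioc_lt_top.ne (by simp)).sub
      (((tPdf_integrable hm).integrableOn).const_mul k)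
  have hkt : k * tPdf m t = 1 := one_div_mul_cancel hpt.ne'
  have hgB : ∀ x ∈ Set.Ioc (-t) t, g x ≤ 0 := by
    intro x hx
    have hx2 : x ^ 2 ≤ t ^ 2 := by nlinarith [hx.1, hx.2]
    have h1 : tPdf m t ≤ tPdf m x := tPdf_anti hm hx2
    have : k * tPdf m t ≤ k * tPdf m x := by gcongr
    simp only [hg]
    linarith [hkt ▸ this]
  have hgO : ∀ x ∉ Set.Ioc (-t) t, 0 ≤ g x := by
    intro x hx
    have hx2 : t ^ 2 ≤ x ^ 2 := by
      rcases not_and_or.1 (fun h => hx ⟨h.1, h.2⟩) with h | h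
      · push_neg at h; nlinarith
      · push_neg at h; nlinarith
    have h1 : tPdf m x ≤ tPdf m t := tPdf_anti hm hx2
    have : k * tPdf m x ≤ k * tPdf m t := by gcongr
    simp only [hg]
    linarith [hkt ▸ this]
  have hA : MeasurableSet (Set.Ioc a b) := measurableSet_Ioc
  have hB : MeasurableSet (Set.Ioc (-t) t) := measurableSet_Ioc
  have e1 : (∫ x in Set.Ioc a b ∩ Set.Ioc (-t) t, g x) + ∫ x in Set.Ioc a b \ Set.Ioc (-t) t, g x
      = ∫ x in Set.Ioc a b, g x := MeasureTheory.integral_inter_add_diff hB (hint a b)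
  have e2 : (∫ x in Set.Ioc (-t) t ∩ Set.Ioc a b, g x) + ∫ x in Set.Ioc (-t) t \ Set.Ioc a b, g x
      = ∫ x in Set.Ioc (-t) t, g x := MeasureTheory.integral_inter_add_diff hA (hint (-t) t)
  have e3 : (∫ x in Set.Ioc (-t) t ∩ Set.Ioc a b, g x)
      = ∫ x in Set.Ioc a b ∩ Set.Ioc (-t) t, g x := by rw [Set.inter_comm]
  have p1 : 0 ≤ ∫ x in Set.Ioc a b \ Set.Ioc (-t) t, g x :=
    MeasureTheory.setIntegral_nonneg (hA.diff hB) (fun x hx => hgO x hx.2)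
  have p2 : (∫ x in Set.Ioc (-t) t \ Set.Ioc a b, g x) ≤ 0 :=
    MeasureTheory.setIntegral_nonpos (hB.diff hA) (fun x hx => hgB x hx.1)
  have main : (∫ x in Set.Ioc (-t) t, g x) ≤ ∫ x in Set.Ioc a b, g x := by
    rw [← e1, ← e2, e3]; linarith
  rw [integral_g hm k hab, integral_g hm k (by linarith : -t ≤ t)] at main
  linarith

/-- Let `n ≥ 2`, `s > 0`, `α ∈ (0,1)`, and `t > 0` with
`F_{n-1}(t) - F_{n-1}(-t) = 1 - α`; set `k₂ = 1/f_{n-1}(t)`. Then on `{q ≤ r}` the function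
`(r - q)/s - (k₂/√n)(F_{n-1}(√n r/s) - F_{n-1}(√n q/s))` attains its minimum at
`(q, r) = (-t s/√n, t s/√n)`. -/
theorem stmt10 (n : ℕ) (hn : 2 ≤ n) (s : ℝ) (hs : 0 < s) (α : ℝ) (hα0 : 0 < α) (hα1 : α < 1)
    (t : ℝ) (ht : 0 < t) (htα : tCdf (n - 1) t - tCdf (n - 1) (-t) = 1 - α)
    (q r : ℝ) (hqr : q ≤ r) :
    (r - q) / s -
        ((1 / tPdf (n - 1) t) / Real.sqrt n) *
          (tCdf (n - 1) (Real.sqrt n * r / s) - tCdf (n - 1) (Real.sqrt n * q / s)) ≥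
      2 * t / Real.sqrt n -
        ((1 / tPdf (n - 1) t) / Real.sqrt n) * (tCdf (n - 1) t - tCdf (n - 1) (-t)) := by
  have hm : 1 ≤ n - 1 := by omega
  have hn' : (0:ℝ) < (n:ℝ) := by
    have : 0 < n := by omega
    exact_mod_cast this
  have hsn : 0 < Real.sqrt n := Real.sqrt_pos.2 hn'
  set a' : ℝ := Real.sqrt n * q / s with ha'
  set b' : ℝ := Real.sqrt n * r / s with hb'
  have hab : a' ≤ b' := by
    rw [ha', hb']
    gcongr
  rw [tCdf_sub hm hab, tCdf_sub hm (by linarith : -t ≤ t)]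
  set k : ℝ := 1 / tPdf (n - 1) t with hk
  set Ib : ℝ := ∫ x in Set.Ioc a' b', tPdf (n - 1) x with hIb
  set It : ℝ := ∫ x in Set.Ioc (-t) t, tPdf (n - 1) x with hIt
  have hkey : (b' - a') - k * Ib ≥ (t - (-t)) - k * It := key hm ht hab
  have hdiff : b' - a' = Real.sqrt n * ((r - q) / s) := by
    rw [ha', hb']; field_simp
  have h2 : ((t - (-t)) - k * It) / Real.sqrt n ≤ ((b' - a') - k * Ib) / Real.sqrt n := by
    gcongr
  have e1 : ((b' - a') - k * Ib) / Real.sqrt n = (r - q) / s - (k / Real.sqrt n) * Ib := by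
    rw [hdiff]; field_simp
  have e2 : ((t - (-t)) - k * It) / Real.sqrt n = 2 * t / Real.sqrt n - (k / Real.sqrt n) * It := by
    field_simp; ring
  rw [e1, e2] at h2
  exact h2
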